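/- Let u(x) = x/|x| on ℝ², 0 < τ, M > 2, and 0 < Mτ < r. Then for every ξ ∈ ℝ² with |ξ| ≤ 1, ∫_{B_r \ B_{Mτ}} |u(x + τξ) − u(x)|² dx ≤ (M/(M−1)) · 2π τ² |ξ|² ( ½ |log(Mτ)| + ½ |log r| + C/M ) for a universal constant C. -/

import Mathlib

open MeasureTheory Real Filter Metric Set

noncomputable section

abbrev E2 := EuclideanSpace ℝ (Fin 2)

set_option maxHeartbeats 1000000 in
theorem key_real {M s e t p : ℝ} (hM : 2 < M) (he : 0 ≤ e) (hse : M * e ≤ s) (hs : 0 < s)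
    (ht : s - e ≤ t) (hp : |p| ≤ s * e) (hts : t ^ 2 = s ^ 2 + 2 * p + e ^ 2) :
    2 - 2 * (s ^ 2 + p) / (t * s) ≤ M / (M - 1) * (e ^ 2 / s ^ 2 - p ^ 2 / s ^ 4 + 2 * e ^ 3 / s ^ 3) := by
  have h2e : 2 * e ≤ s := by nlinarith
  have hes : 0 < s - e := by nlinarith
  have ht0 : 0 < t := lt_of_lt_of_le hes ht
  have hp2 : p ^ 2 ≤ s ^ 2 * e ^ 2 := by nlinarith [abs_nonneg p, sq_abs p]
  have hpl : -(s * e) ≤ p := neg_le_of_abs_le hp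
  have hD : 2 * (s * (s - e)) ≤ t * s + s ^ 2 + p := by nlinarith
  have hD0 : 0 < t * s + s ^ 2 + p := by nlinarith
  have hMe : 0 ≤ M * e := by nlinarith
  have eq1 : 2 - 2 * (s ^ 2 + p) / (t * s) =
      2 * (e ^ 2 * s ^ 2 - p ^ 2) / (s * t * (t * s + s ^ 2 + p)) := by
    rw [sub_div' (by positivity), div_eq_div_iff (by positivity) (by positivity)]
    linear_combination (2 * t * s ^ 3) * hts
  have hN : 0 ≤ e ^ 2 * s ^ 2 - p ^ 2 := by nlinarith
  have hstar : (M - 1) * s ^ 3 ≤ M * ((s + 2 * e) * (s - e) ^ 2) := by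
    nlinarith [mul_nonneg (sub_nonneg.2 hse)
        (by nlinarith [mul_nonneg hMe (by linarith : (0:ℝ) ≤ s - 2*e)] : (0:ℝ) ≤ s^2 + M*e*s - 2*M*e^2),
      mul_nonneg (mul_nonneg (by nlinarith : (0:ℝ) ≤ M*(M-1)) (sq_nonneg e)) (by linarith : (0:ℝ) ≤ s - 2*e)]
  have h1 : 2 * (e ^ 2 * s ^ 2 - p ^ 2) / (s * t * (t * s + s ^ 2 + p)) ≤
      (e ^ 2 * s ^ 2 - p ^ 2) / (s ^ 2 * (s - e) ^ 2) := by
    rw [div_le_div_iff₀ (by positivity) (by positivity)]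
    have hden : 2 * (s ^ 2 * (s - e) ^ 2) ≤ s * t * (t * s + s ^ 2 + p) := by
      nlinarith [mul_le_mul_of_nonneg_left hD (mul_nonneg hs.le hes.le),
        mul_le_mul_of_nonneg_right ht (by positivity : (0:ℝ) ≤ s * (t * s + s ^ 2 + p))]
    nlinarith [mul_le_mul_of_nonneg_left hden hN]
  have hRHS : M / (M - 1) * (e ^ 2 / s ^ 2 - p ^ 2 / s ^ 4 + 2 * e ^ 3 / s ^ 3) =
      M * (e ^ 2 * s ^ 2 - p ^ 2 + 2 * e ^ 3 * s) / ((M - 1) * s ^ 4) := by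
    rw [div_mul_eq_mul_div, div_eq_div_iff (ne_of_gt (by linarith : (0:ℝ) < M - 1)) (ne_of_gt (mul_pos (by linarith : (0:ℝ) < M - 1) (by positivity)))]
    field_simp
  have hA' : e ^ 2 * s ^ 2 - p ^ 2 ≤ e ^ 2 * s ^ 2 := by nlinarith [sq_nonneg p]
  have h2 : (e ^ 2 * s ^ 2 - p ^ 2) / (s ^ 2 * (s - e) ^ 2) ≤
      M * (e ^ 2 * s ^ 2 - p ^ 2 + 2 * e ^ 3 * s) / ((M - 1) * s ^ 4) := by
    rw [div_le_div_iff₀ (by positivity) (mul_pos (by linarith : (0:ℝ) < M - 1) (by positivity))]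
    have h_a : (e ^ 2 * s ^ 2 - p ^ 2) * s * ((M - 1) * s ^ 3) ≤
        (e ^ 2 * s ^ 2 - p ^ 2) * s * (M * ((s + 2 * e) * (s - e) ^ 2)) :=
      mul_le_mul_of_nonneg_left hstar (mul_nonneg hN hs.le)
    have h_c : (2 * M * e * s * (s - e) ^ 2) * (e ^ 2 * s ^ 2 - p ^ 2) ≤
        (2 * M * e * s * (s - e) ^ 2) * (e ^ 2 * s ^ 2) :=
      mul_le_mul_of_nonneg_left hA' (by nlinarith [mul_nonneg hMe hs.le, sq_nonneg (s - e)])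
    nlinarith [h_a, h_c]
  rw [eq1]
  exact le_trans h1 (le_trans h2 (le_of_eq hRHS.symm))


theorem key_pt {M : ℝ} (hM : 2 < M) (x h : E2) (hx : 0 < ‖x‖) (hxh : M * ‖h‖ ≤ ‖x‖) :
    ‖(‖x + h‖⁻¹ • (x + h) : E2) - ‖x‖⁻¹ • x‖ ^ 2 ≤
      M / (M - 1) * (‖h‖ ^ 2 / ‖x‖ ^ 2 - (inner ℝ x h : ℝ) ^ 2 / ‖x‖ ^ 4 + 2 * ‖h‖ ^ 3 / ‖x‖ ^ 3) := by
  set s := ‖x‖ with hs_def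
  set e := ‖h‖ with he_def
  set t := ‖x + h‖ with ht_def
  set p : ℝ := inner ℝ x h with hp_def
  have he : 0 ≤ e := norm_nonneg _
  have h2e : 2 * e ≤ s := by nlinarith
  have ht : s - e ≤ t := by
    have := norm_add_le (x + h) (-h)
    simp only [add_neg_cancel_right, norm_neg] at this
    linarith
  have ht0 : 0 < t := by nlinarith
  have hp : |p| ≤ s * e := abs_real_inner_le_norm x h
  have hts : t ^ 2 = s ^ 2 + 2 * p + e ^ 2 := by
    rw [ht_def, hs_def, he_def, hp_def, @norm_add_sq_real]
  have hLHS : ‖(‖x + h‖⁻¹ • (x + h) : E2) - ‖x‖⁻¹ • x‖ ^ 2 = 2 - 2 * (s ^ 2 + p) / (t * s) := by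
    rw [@norm_sub_sq_real]
    rw [norm_smul, norm_smul]
    rw [real_inner_smul_left, real_inner_smul_right]
    rw [inner_add_left, real_inner_self_eq_norm_sq, ← real_inner_comm h x]
    simp only [norm_inv, norm_norm]
    rw [← ht_def, ← hs_def, ← hp_def]
    rw [inv_mul_cancel₀ ht0.ne', inv_mul_cancel₀ hx.ne']
    field_simp
    ring
  rw [hLHS]
  exact key_real hM he hxh hx ht hp hts


lemma vol_ball_one : (volume (ball (0 : E2) 1)).toReal = π := by
  rw [EuclideanSpace.volume_ball]
  simp only [Fintype.card_fin, ENNReal.ofReal_one, one_pow, one_mul]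
  have h2 : Real.Gamma ((2:ℕ) / 2 + 1) = 1 := by norm_num
  rw [h2]
  simp [Real.sq_sqrt Real.pi_nonneg, ENNReal.toReal_ofReal Real.pi_nonneg]


lemma radial_integral (f : ℝ → ℝ) :
    ∫ x : E2, f ‖x‖ = 2 * π * ∫ y in Ioi (0:ℝ), y * f y := by
  have h := MeasureTheory.integral_fun_norm_addHaar (volume : Measure E2) f
  rw [finrank_euclideanSpace, Fintype.card_fin] at h
  norm_num [smul_eq_mul] at h
  rw [h, measureReal_def, vol_ball_one]
  ring


lemma annulus_integral {a b : ℝ} (ha : 0 < a) (f : ℝ → ℝ) :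
    ∫ x in ball (0 : E2) b \ ball (0 : E2) a, f ‖x‖
      = 2 * π * ∫ y in Ico a b, y * f y := by
  have hmem : ∀ x : E2, x ∈ ball (0 : E2) b \ ball (0 : E2) a ↔ ‖x‖ ∈ Ico a b := by
    intro x
    simp [mem_diff, mem_ball, dist_zero_right, mem_Ico, and_comm, not_lt]
  have hms : MeasurableSet (ball (0 : E2) b \ ball (0 : E2) a) :=
    measurableSet_ball.diff measurableSet_ball
  rw [← integral_indicator hms]
  have h1 : (indicator (ball (0 : E2) b \ ball (0 : E2) a) (fun x => f ‖x‖))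
      = fun x => (indicator (Ico a b) f) ‖x‖ := by
    funext x
    by_cases hx : x ∈ ball (0 : E2) b \ ball (0 : E2) a
    · rw [indicator_of_mem hx, indicator_of_mem ((hmem x).1 hx)]
    · rw [indicator_of_notMem hx, indicator_of_notMem (fun hc => hx ((hmem x).2 hc))]
  rw [h1, radial_integral]
  have h2 : (fun y => y * indicator (Ico a b) f y) = indicator (Ico a b) (fun y => y * f y) := by
    funext y
    by_cases hy : y ∈ Ico a b
    · rw [indicator_of_mem hy, indicator_of_mem hy]
    · rw [indicator_of_notMem hy, indicator_of_notMem hy, mul_zero]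
  have hsub : Ico a b ∩ Ioi (0:ℝ) = Ico a b :=
    inter_eq_left.mpr (fun y hy => lt_of_lt_of_le ha hy.1)
  rw [h2, integral_indicator measurableSet_Ico, Measure.restrict_restrict measurableSet_Ico, hsub]


lemma Ico_int_inv_sq {a b : ℝ} (ha : 0 < a) (hab : a ≤ b) :
    ∫ y in Ico a b, y * (y ^ 2)⁻¹ = log b - log a := by
  have h0 : (0:ℝ) ∉ Set.uIcc a b := by
    rw [uIcc_of_le hab]; intro hc; exact absurd hc.1 (by linarith)
  rw [integral_Ico_eq_integral_Ioo, ← integral_Ioc_eq_integral_Ioo,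
    ← intervalIntegral.integral_of_le hab]
  rw [intervalIntegral.integral_congr (g := fun y => y⁻¹) ?_]
  · rw [integral_inv h0, log_div (by linarith) (by linarith)]
  · intro y hy
    rw [uIcc_of_le hab] at hy
    have hy0 : y ≠ 0 := by intro hc; subst hc; exact absurd hy.1 (by linarith)
    field_simp


lemma Ico_int_inv_cube {a b : ℝ} (ha : 0 < a) (hab : a ≤ b) :
    ∫ y in Ico a b, y * (y ^ 3)⁻¹ = a⁻¹ - b⁻¹ := by
  have h0 : (0:ℝ) ∉ Set.uIcc a b := by
    rw [uIcc_of_le hab]; intro hc; exact absurd hc.1 (by linarith)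
  rw [integral_Ico_eq_integral_Ioo, ← integral_Ioc_eq_integral_Ioo,
    ← intervalIntegral.integral_of_le hab]
  rw [intervalIntegral.integral_congr (g := fun y => y ^ (-2 : ℤ)) ?_]
  · rw [integral_zpow (Or.inr ⟨by norm_num, h0⟩)]
    norm_num
    ring
  · intro y hy
    rw [uIcc_of_le hab] at hy
    have hy0 : y ≠ 0 := by intro hc; subst hc; exact absurd hy.1 (by linarith)
    show y * (y ^ 3)⁻¹ = y ^ (-2 : ℤ)
    rw [zpow_neg]
    norm_num
    have : y * (y ^ 3)⁻¹ = (y ^ 2)⁻¹ := by field_simp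
    exact this


instance : Fact (Module.finrank ℝ E2 = 2) := ⟨finrank_euclideanSpace_fin⟩

lemma rot_exists (h : E2) : ∃ R : E2 ≃ₗᵢ[ℝ] E2,
    ∀ x : E2, (inner ℝ x h : ℝ)^2 + (inner ℝ x (R h) : ℝ)^2 = ‖x‖^2 * ‖h‖^2 := by
  let o : Orientation ℝ E2 (Fin 2) :=
    ((stdOrthonormalBasis ℝ E2).reindex (finCongr finrank_euclideanSpace_fin)).toBasis.orientation
  refine ⟨o.rightAngleRotation, fun x => ?_⟩
  simp only [o.inner_rightAngleRotation_right, neg_sq]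
  exact o.inner_sq_add_areaForm_sq x h


lemma integrableOn_bdd {S : Set E2} (hms : MeasurableSet S) (hfin : volume S ≠ ⊤) {f : E2 → ℝ}
    (hm : AEStronglyMeasurable f volume) {c : ℝ} (hb : ∀ x ∈ S, |f x| ≤ c) :
    IntegrableOn f S := by
  apply Measure.integrableOn_of_bounded hfin hm (M := c)
  rw [ae_restrict_iff' hms]
  filter_upwards with x hx
  simpa [Real.norm_eq_abs] using hb x hx

set_option maxHeartbeats 2000000 in
/-- Annulus estimate for translated vortices: there is a universal constant `C` such that for
`u(x) = x/|x|`, `M > 2`, `τ > 0`, `Mτ < r`, and `|ξ| ≤ 1`,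
`∫_{B_r∖B_{Mτ}} |u(x+τξ)−u(x)|² dx
  ≤ (M/(M−1)) 2π τ²|ξ|² (½|log(Mτ)| + ½|log r| + C/M)`. -/
theorem vortex_translation_estimate :
    ∃ C : ℝ, 0 < C ∧ ∀ (M τ r : ℝ), 2 < M → 0 < τ → M * τ < r →
      ∀ ξ : E2, ‖ξ‖ ≤ 1 →
      (∫ x in ball (0 : E2) r \ ball (0 : E2) (M * τ),
          ‖(‖x + τ • ξ‖⁻¹ • (x + τ • ξ) : E2) - ‖x‖⁻¹ • x‖ ^ 2) ≤
        M / (M - 1) * (2 * π) * τ ^ 2 * ‖ξ‖ ^ 2 *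
          (1 / 2 * |Real.log (M * τ)| + 1 / 2 * |Real.log r| + C / M) := by
  refine ⟨2, by norm_num, fun M τ r hM hτ hMr ξ hξ => ?_⟩
  set h : E2 := τ • ξ with hh_def
  set a : ℝ := M * τ with ha_def
  set S : Set E2 := ball (0 : E2) r \ ball (0 : E2) a with hS_def
  have hMpos : (0:ℝ) < M := by linarith
  have ha : 0 < a := mul_pos hMpos hτ
  have hab : a ≤ r := hMr.le
  have hw : ‖h‖ = τ * ‖ξ‖ := by rw [hh_def, norm_smul, Real.norm_eq_abs, abs_of_pos hτ]
  have hw0 : 0 ≤ ‖ξ‖ := norm_nonneg _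
  have hMh : M * ‖h‖ ≤ a := by rw [hw, ha_def]; nlinarith
  have hms : MeasurableSet S := measurableSet_ball.diff measurableSet_ball
  have hSfin : volume S ≠ ⊤ :=
    ne_of_lt (lt_of_le_of_lt (measure_mono diff_subset) measure_ball_lt_top)
  have hSnorm : ∀ x ∈ S, a ≤ ‖x‖ ∧ ‖x‖ < r := by
    intro x hx
    rcases hx with ⟨hx1, hx2⟩
    rw [mem_ball, dist_zero_right] at hx1
    rw [mem_ball, dist_zero_right] at hx2
    exact ⟨not_lt.1 hx2, hx1⟩
  -- measurability
  have mnorm : Measurable fun x : E2 => ‖x‖ := measurable_norm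
  have minner : Measurable fun x : E2 => (inner ℝ x h : ℝ) :=
    (continuous_id.inner continuous_const).measurable
  have m_lhs : Measurable fun x : E2 => ‖(‖x + h‖⁻¹ • (x + h) : E2) - ‖x‖⁻¹ • x‖ ^ 2 := by
    have h1 : Measurable fun x : E2 => x + h := measurable_add_const h
    exact ((((mnorm.comp h1).inv.smul h1).sub (mnorm.inv.smul measurable_id)).norm.pow_const 2)
  -- integrability
  have int_lhs : IntegrableOn (fun x : E2 => ‖(‖x + h‖⁻¹ • (x + h) : E2) - ‖x‖⁻¹ • x‖ ^ 2) S := by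
    apply integrableOn_bdd hms hSfin m_lhs.aestronglyMeasurable (c := 4)
    intro x _
    have hv : ∀ v : E2, ‖(‖v‖⁻¹ • v : E2)‖ ≤ 1 := by
      intro v
      rcases eq_or_ne v 0 with rfl | hv
      · simp
      · rw [norm_smul, norm_inv, norm_norm, inv_mul_cancel₀ (norm_ne_zero_iff.2 hv)]
    have := norm_sub_le ((‖x + h‖⁻¹ • (x + h)) : E2) (‖x‖⁻¹ • x)
    have h1 := hv (x + h); have h2 := hv x
    rw [abs_of_nonneg (by positivity)]
    nlinarith [norm_nonneg ((‖x + h‖⁻¹ • (x + h) : E2) - ‖x‖⁻¹ • x)]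
  have int1 : IntegrableOn (fun x : E2 => ‖h‖ ^ 2 / ‖x‖ ^ 2) S := by
    apply integrableOn_bdd hms hSfin (measurable_const.div (mnorm.pow_const 2)).aestronglyMeasurable
      (c := ‖h‖ ^ 2 / a ^ 2)
    intro x hx
    have hxa := (hSnorm x hx).1
    have hxpos : 0 < ‖x‖ := lt_of_lt_of_le ha hxa
    show |‖h‖ ^ 2 / ‖x‖ ^ 2| ≤ _
    rw [abs_of_nonneg (by positivity), div_le_div_iff₀ (pow_pos hxpos 2) (pow_pos ha 2)]
    nlinarith [mul_le_mul_of_nonneg_left (pow_le_pow_left₀ ha.le hxa 2) (sq_nonneg ‖h‖)]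
  have int2gen : ∀ v : E2, ‖v‖ = ‖h‖ → IntegrableOn (fun x : E2 => (inner ℝ x v : ℝ) ^ 2 / ‖x‖ ^ 4) S := by
    intro v hvn
    have mv : Measurable fun x : E2 => (inner ℝ x v : ℝ) ^ 2 / ‖x‖ ^ 4 := by
      apply Measurable.div _ (mnorm.pow_const 4)
      apply Measurable.pow_const
      exact (continuous_id.inner continuous_const).measurable
    apply integrableOn_bdd hms hSfin mv.aestronglyMeasurable (c := ‖h‖ ^ 2 / a ^ 2)
    intro x hx
    have hxa := (hSnorm x hx).1
    have hxpos : 0 < ‖x‖ := lt_of_lt_of_le ha hxa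
    have hip : |(inner ℝ x v : ℝ)| ≤ ‖x‖ * ‖v‖ := abs_real_inner_le_norm x v
    have hip2 : (inner ℝ x v : ℝ) ^ 2 ≤ ‖x‖ ^ 2 * ‖v‖ ^ 2 := by
      nlinarith [sq_abs (inner ℝ x v : ℝ), abs_nonneg (inner ℝ x v : ℝ), norm_nonneg x, norm_nonneg v]
    rw [← hvn, abs_of_nonneg (by positivity), div_le_div_iff₀ (pow_pos hxpos 4) (pow_pos ha 2)]
    nlinarith [mul_le_mul_of_nonneg_right hip2 (sq_nonneg a),
      mul_le_mul_of_nonneg_left (pow_le_pow_left₀ ha.le hxa 2)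
        (mul_nonneg (sq_nonneg ‖x‖) (sq_nonneg ‖v‖))]
  have int2 := int2gen h rfl
  have int3 : IntegrableOn (fun x : E2 => 2 * ‖h‖ ^ 3 / ‖x‖ ^ 3) S := by
    apply integrableOn_bdd hms hSfin (measurable_const.div (mnorm.pow_const 3)).aestronglyMeasurable
      (c := 2 * ‖h‖ ^ 3 / a ^ 3)
    intro x hx
    have hxa := (hSnorm x hx).1
    have hxpos : 0 < ‖x‖ := lt_of_lt_of_le ha hxa
    show |2 * ‖h‖ ^ 3 / ‖x‖ ^ 3| ≤ _
    rw [abs_of_nonneg (by positivity), div_le_div_iff₀ (pow_pos hxpos 3) (pow_pos ha 3)]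
    nlinarith [mul_le_mul_of_nonneg_left (pow_le_pow_left₀ ha.le hxa 3)
      (by positivity : (0:ℝ) ≤ 2 * ‖h‖ ^ 3)]
  -- pointwise bound
  have hpt : ∀ x ∈ S,
      ‖(‖x + h‖⁻¹ • (x + h) : E2) - ‖x‖⁻¹ • x‖ ^ 2 ≤
        M / (M - 1) * (‖h‖ ^ 2 / ‖x‖ ^ 2 - (inner ℝ x h : ℝ) ^ 2 / ‖x‖ ^ 4 + 2 * ‖h‖ ^ 3 / ‖x‖ ^ 3) := by
    intro x hx
    have hxa := (hSnorm x hx).1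
    exact key_pt hM x h (lt_of_lt_of_le ha hxa) (le_trans hMh hxa)
  -- integral identities
  have hI2 : ∫ x in S, (‖x‖ ^ 2)⁻¹ = 2 * π * (log r - log a) := by
    rw [hS_def, annulus_integral ha (fun ρ => (ρ ^ 2)⁻¹), Ico_int_inv_sq ha hab]
  have hI3 : ∫ x in S, (‖x‖ ^ 3)⁻¹ = 2 * π * (a⁻¹ - r⁻¹) := by
    rw [hS_def, annulus_integral ha (fun ρ => (ρ ^ 3)⁻¹), Ico_int_inv_cube ha hab]
  have hE1 : ∫ x in S, ‖h‖ ^ 2 / ‖x‖ ^ 2 = ‖h‖ ^ 2 * (2 * π * (log r - log a)) := by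
    simp only [div_eq_mul_inv]
    rw [integral_const_mul, hI2]
  have hE3 : ∫ x in S, 2 * ‖h‖ ^ 3 / ‖x‖ ^ 3 = 2 * ‖h‖ ^ 3 * (2 * π * (a⁻¹ - r⁻¹)) := by
    simp only [div_eq_mul_inv, mul_assoc]
    rw [integral_const_mul, integral_const_mul, hI3]
    ring
  -- the rotation argument
  obtain ⟨R, hR⟩ := rot_exists h
  have hRS : ⇑R ⁻¹' S = S := by
    ext x
    simp [hS_def, mem_diff, mem_ball, dist_zero_right, R.norm_map]
  have hswap : ∫ x in S, (inner ℝ x (R h) : ℝ) ^ 2 / ‖x‖ ^ 4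
      = ∫ x in S, (inner ℝ x h : ℝ) ^ 2 / ‖x‖ ^ 4 := by
    conv_rhs => rw [← hRS]
    rw [← (R.measurePreserving).setIntegral_preimage_emb
      (R.toHomeomorph.measurableEmbedding) (fun y => (inner ℝ y (R h) : ℝ) ^ 2 / ‖y‖ ^ 4) S]
    apply setIntegral_congr_fun (hms.preimage R.toHomeomorph.measurable)
    intro x _
    simp only [LinearIsometryEquiv.inner_map_map, LinearIsometryEquiv.norm_map]
  have hE2 : ∫ x in S, (inner ℝ x h : ℝ) ^ 2 / ‖x‖ ^ 4
      = ‖h‖ ^ 2 / 2 * (2 * π * (log r - log a)) := by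
    have hadd : (∫ x in S, (inner ℝ x h : ℝ) ^ 2 / ‖x‖ ^ 4)
        + (∫ x in S, (inner ℝ x (R h) : ℝ) ^ 2 / ‖x‖ ^ 4)
        = ‖h‖ ^ 2 * (2 * π * (log r - log a)) := by
      rw [← integral_add int2 (int2gen (R h) (R.norm_map h)), ← hI2, ← integral_const_mul]
      apply setIntegral_congr_fun hms
      intro x hx
      have hxpos : 0 < ‖x‖ := lt_of_lt_of_le ha (hSnorm x hx).1
      show (inner ℝ x h : ℝ) ^ 2 / ‖x‖ ^ 4 + (inner ℝ x (R h) : ℝ) ^ 2 / ‖x‖ ^ 4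
        = ‖h‖ ^ 2 * (‖x‖ ^ 2)⁻¹
      rw [← add_div, hR x]
      field_simp [hxpos.ne']
    rw [hswap] at hadd
    linarith
  -- put it together
  have hmono : (∫ x in S, ‖(‖x + h‖⁻¹ • (x + h) : E2) - ‖x‖⁻¹ • x‖ ^ 2)
      ≤ ∫ x in S, M / (M - 1) * (‖h‖ ^ 2 / ‖x‖ ^ 2 - (inner ℝ x h : ℝ) ^ 2 / ‖x‖ ^ 4 + 2 * ‖h‖ ^ 3 / ‖x‖ ^ 3) :=
    setIntegral_mono_on int_lhs (((int1.sub int2).add int3).const_mul _) hms hpt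
  have hsplit : ∫ x in S, M / (M - 1) * (‖h‖ ^ 2 / ‖x‖ ^ 2 - (inner ℝ x h : ℝ) ^ 2 / ‖x‖ ^ 4 + 2 * ‖h‖ ^ 3 / ‖x‖ ^ 3)
      = M / (M - 1) * (‖h‖ ^ 2 * (2 * π * (log r - log a)) - ‖h‖ ^ 2 / 2 * (2 * π * (log r - log a))
        + 2 * ‖h‖ ^ 3 * (2 * π * (a⁻¹ - r⁻¹))) := by
    have int12 : IntegrableOn
        (fun x : E2 => ‖h‖ ^ 2 / ‖x‖ ^ 2 - (inner ℝ x h : ℝ) ^ 2 / ‖x‖ ^ 4) S := int1.sub int2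
    rw [integral_const_mul, integral_add int12 int3, integral_sub int1 int2, hE1, hE2, hE3]
  have hKnn : 0 ≤ M / (M - 1) := div_nonneg (by linarith) (by linarith)
  have hw3 : ‖ξ‖ ^ 3 ≤ ‖ξ‖ ^ 2 := pow_le_pow_of_le_one hw0 hξ (by norm_num)
  have h3 : τ ^ 3 * ‖ξ‖ ^ 3 * (a⁻¹ - r⁻¹) ≤ τ ^ 2 * ‖ξ‖ ^ 2 / M := by
    have hr_inv : (0:ℝ) ≤ r⁻¹ := inv_nonneg.2 (le_of_lt (lt_trans ha hMr))
    have step1 : τ ^ 3 * ‖ξ‖ ^ 3 * (a⁻¹ - r⁻¹) ≤ τ ^ 3 * ‖ξ‖ ^ 3 * a⁻¹ := by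
      have hnn : (0:ℝ) ≤ τ ^ 3 * ‖ξ‖ ^ 3 := by positivity
      nlinarith [mul_nonneg hnn hr_inv]
    have step2 : τ ^ 3 * ‖ξ‖ ^ 3 * a⁻¹ = τ ^ 2 * ‖ξ‖ ^ 3 / M := by
      rw [ha_def]
      field_simp
    have step3 : τ ^ 2 * ‖ξ‖ ^ 3 / M ≤ τ ^ 2 * ‖ξ‖ ^ 2 / M := by gcongr
    linarith
  have hL : log r - log a ≤ |log a| + |log r| := by
    have h1 := le_abs_self (log r)
    have h2 := neg_abs_le (log a)
    linarith
  have hfinal : ‖h‖ ^ 2 * (2 * π * (log r - log a)) - ‖h‖ ^ 2 / 2 * (2 * π * (log r - log a))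
      + 2 * ‖h‖ ^ 3 * (2 * π * (a⁻¹ - r⁻¹))
      ≤ (2 * π) * τ ^ 2 * ‖ξ‖ ^ 2 * (1 / 2 * |log a| + 1 / 2 * |log r| + 2 / M) := by
    rw [hw]
    have t1 : 0 ≤ π * τ ^ 2 * ‖ξ‖ ^ 2 * ((|log a| + |log r|) - (log r - log a)) :=
      mul_nonneg (by positivity) (by linarith)
    have t2 : 0 ≤ 4 * π * (τ ^ 2 * ‖ξ‖ ^ 2 / M - τ ^ 3 * ‖ξ‖ ^ 3 * (a⁻¹ - r⁻¹)) :=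
      mul_nonneg (by positivity) (by linarith)
    have key : (2 * π) * τ ^ 2 * ‖ξ‖ ^ 2 * (1 / 2 * |log a| + 1 / 2 * |log r| + 2 / M)
        - ((τ * ‖ξ‖) ^ 2 * (2 * π * (log r - log a))
          - (τ * ‖ξ‖) ^ 2 / 2 * (2 * π * (log r - log a))
          + 2 * (τ * ‖ξ‖) ^ 3 * (2 * π * (a⁻¹ - r⁻¹)))
        = π * τ ^ 2 * ‖ξ‖ ^ 2 * ((|log a| + |log r|) - (log r - log a))
          + 4 * π * (τ ^ 2 * ‖ξ‖ ^ 2 / M - τ ^ 3 * ‖ξ‖ ^ 3 * (a⁻¹ - r⁻¹)) := by ring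
    linarith [t1, t2]
  calc (∫ x in S, ‖(‖x + h‖⁻¹ • (x + h) : E2) - ‖x‖⁻¹ • x‖ ^ 2)
      ≤ ∫ x in S, M / (M - 1) * (‖h‖ ^ 2 / ‖x‖ ^ 2 - (inner ℝ x h : ℝ) ^ 2 / ‖x‖ ^ 4
          + 2 * ‖h‖ ^ 3 / ‖x‖ ^ 3) := hmono
    _ = M / (M - 1) * (‖h‖ ^ 2 * (2 * π * (log r - log a))
          - ‖h‖ ^ 2 / 2 * (2 * π * (log r - log a))
          + 2 * ‖h‖ ^ 3 * (2 * π * (a⁻¹ - r⁻¹))) := hsplit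
    _ ≤ M / (M - 1) * ((2 * π) * τ ^ 2 * ‖ξ‖ ^ 2
          * (1 / 2 * |log a| + 1 / 2 * |log r| + 2 / M)) :=
        mul_le_mul_of_nonneg_left hfinal hKnn
    _ = M / (M - 1) * (2 * π) * τ ^ 2 * ‖ξ‖ ^ 2
          * (1 / 2 * |log a| + 1 / 2 * |log r| + 2 / M) := by ring
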